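/- If a nonzero codeword w of a linear code C satisfies X(D(0)) ∩ D(w) ≠ ∅, then w is a leader codeword of C. -/

import Mathlib

open Finset Set

variable {p m n : ℕ} [Fact p.Prime] {K : Type} [Field K] [Fintype K] [DecidableEq K]
  [Algebra (ZMod p) K]

/-- Hamming weight -/
def hw (v : Fin n → K) : ℕ := (Finset.univ.filter fun i => v i ≠ 0).card

/-- Hamming distance -/
def dH (x y : Fin n → K) : ℕ := hw (x - y)

/-- Hamming distance from a word to a set of words -/
noncomputable def dHSet (A : Set (Fin n → K)) (y : Fin n → K) : ℕ := sInf ((dH y) '' A)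

/-- y is a coset leader: minimal Hamming weight in its coset -/
def isCosetLeader (C : Submodule K (Fin n → K)) (y : Fin n → K) : Prop :=
  ∀ c ∈ C, hw y ≤ hw (y + c)

/-- the set of coset leaders -/
def CL (C : Submodule K (Fin n → K)) : Set (Fin n → K) := {y | isCosetLeader C y}

/-- weight of the coset of y -/
noncomputable def cosetWt (C : Submodule K (Fin n → K)) (y : Fin n → K) : ℕ :=
  sInf (hw '' {z | z - y ∈ C})

/-- minimum distance of the code -/
noncomputable def dmin (C : Submodule K (Fin n → K)) : ℕ :=
  sInf (hw '' {c | c ∈ C ∧ c ≠ 0})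

/-- covering radius -/
noncomputable def covRad (C : Submodule K (Fin n → K)) : ℕ :=
  sSup (Set.range fun y => dHSet (C : Set (Fin n → K)) y)

/-- Voronoi region of a codeword -/
def VorD (C : Submodule K (Fin n → K)) (c : Fin n → K) : Set (Fin n → K) :=
  {y | ∀ c' ∈ C, dH y c ≤ dH y c'}

/-- words at Hamming distance exactly one from A -/
def XB (A : Set (Fin n → K)) : Set (Fin n → K) := {y | dHSet A y = 1}

/-- boundary of a set of words -/
def bdry (A : Set (Fin n → K)) : Set (Fin n → K) := XB A ∪ XB Aᶜ

/-- canonical generator e_{ij} = β^{j-1} e_i -/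
def eGen (β : K) (i : Fin n) (j : Fin m) : Fin n → K := Pi.single i (β ^ (j : ℕ))

/-- leader codeword -/
def isLeaderCodeword (C : Submodule K (Fin n → K)) (b : Module.Basis (Fin m) (ZMod p) K)
    (β : K) (w : Fin n → K) : Prop :=
  w ≠ 0 ∧ w ∈ C ∧ ∃ (n₁ n₂ : Fin n → K) (i : Fin n) (j : Fin m),
    w = n₁ + eGen β i j - n₂ ∧
    (b.repr ((n₁ + eGen β i j) i) j).val = (b.repr (n₁ i) j).val + 1 ∧
    isCosetLeader C n₂ ∧ dHSet (CL C) n₁ ≤ 1 ∧ dHSet (CL C) (n₁ + eGen β i j) ≤ 1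

/-- correctable errors: minimal element of each coset w.r.t. the order r -/
def E0 (C : Submodule K (Fin n → K)) (r : (Fin n → K) → (Fin n → K) → Prop) :
    Set (Fin n → K) := {y | ∀ z, z - y ∈ C → z ≠ y → r y z}

/-- uncorrectable errors -/
def E1 (C : Submodule K (Fin n → K)) (r : (Fin n → K) → (Fin n → K) → Prop) :
    Set (Fin n → K) := (E0 C r)ᶜ

/-- H(y) = { c ∈ C : y - c ≺ y } -/
def Hset (C : Submodule K (Fin n → K)) (r : (Fin n → K) → (Fin n → K) → Prop)
    (y : Fin n → K) : Set (Fin n → K) := {c | c ∈ C ∧ r (y - c) y}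

/-- u is a larger half of c -/
def isLargerHalf (r : (Fin n → K) → (Fin n → K) → Prop) (c u : Fin n → K) : Prop :=
  r (u - c) u ∧ ∀ u', r (u' - c) u' → ¬ r u' u

/-- larger halves of elements of T -/
def LH (r : (Fin n → K) → (Fin n → K) → Prop) (T : Set (Fin n → K)) :
    Set (Fin n → K) := {u | ∃ c ∈ T, isLargerHalf r c u}

/-- x ⊂₁ y : componentwise F_p-coefficient containment with disjoint generalized
supports of x and y - x -/
def subset1 (b : Module.Basis (Fin m) (ZMod p) K) (x y : Fin n → K) : Prop :=
  (∀ (i : Fin n) (j : Fin m), (b.repr (x i) j).val ≤ (b.repr (y i) j).val) ∧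
  ∀ (i : Fin n) (j : Fin m), b.repr (x i) j ≠ 0 → b.repr ((y - x) i) j = 0

/-- minimal uncorrectable errors w.r.t. ⊂₁ -/
def M1 (C : Submodule K (Fin n → K)) (r : (Fin n → K) → (Fin n → K) → Prop)
    (b : Module.Basis (Fin m) (ZMod p) K) : Set (Fin n → K) :=
  {y | y ∈ E1 C r ∧ ∀ x, subset1 b x y → x ∈ E1 C r → x = y}

/-- trial set -/
def isTrialSet (C : Submodule K (Fin n → K)) (r : (Fin n → K) → (Fin n → K) → Prop)
    (T : Set (Fin n → K)) : Prop :=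
  T ⊆ (C : Set (Fin n → K)) ∧ (0 : Fin n → K) ∉ T ∧
    ∀ y, y ∈ E0 C r ↔ ∀ c ∈ T, (y = y + c ∨ r y (y + c))


lemma hw_zero' : hw (0 : Fin n → K) = 0 := by simp [hw]

lemma hw_neg' (x : Fin n → K) : hw (-x) = hw x := by simp [hw]

lemma hw_add_le' (x y : Fin n → K) : hw (x + y) ≤ hw x + hw y := by
  unfold hw
  calc (Finset.univ.filter fun i => (x + y) i ≠ 0).card
      ≤ ((Finset.univ.filter fun i => x i ≠ 0) ∪
          (Finset.univ.filter fun i => y i ≠ 0)).card := by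
        apply Finset.card_le_card
        intro i hi
        simp only [Finset.mem_filter, Finset.mem_union, Finset.mem_univ, true_and,
          Pi.add_apply] at *
        by_contra h
        push_neg at h
        rw [h.1, h.2, add_zero] at hi
        exact hi rfl
    _ ≤ _ := Finset.card_union_le _ _

theorem stmt10 (C : Submodule K (Fin n → K)) (b : Module.Basis (Fin m) (ZMod p) K) (β : K)
    (hβ : ∀ j : Fin m, b j = β ^ (j : ℕ))
    (w : Fin n → K) (hwC : w ∈ C) (hw0 : w ≠ 0)
    (hint : (XB (VorD C 0) ∩ VorD C w).Nonempty) :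
    isLeaderCodeword C b β w := by
  obtain ⟨y, hyX, hyW⟩ := hint
  have h1 : dHSet (VorD C 0) y = 1 := hyX
  have hne : ((dH y) '' VorD C 0).Nonempty := by
    by_contra h
    rw [Set.not_nonempty_iff_eq_empty] at h
    rw [dHSet, h] at h1
    simp at h1
  have hmem := Nat.sInf_mem hne
  rw [show sInf ((dH y) '' VorD C 0) = 1 from h1] at hmem
  obtain ⟨v, hv, hdyv⟩ := hmem
  -- v is a coset leader
  have hvCL : v ∈ CL C := by
    intro c hc
    have := hv (-c) (neg_mem hc)
    simpa [dH, sub_neg_eq_add] using this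
  -- y is not in VorD C 0
  have hyNot : y ∉ VorD C 0 := by
    intro h
    have h0 : dHSet (VorD C 0) y ≤ 0 :=
      Nat.sInf_le ⟨y, h, by simp [dH, hw_zero']⟩
    omega
  -- extract the coordinate where y and v differ
  have hcard : (Finset.univ.filter fun i => (y - v) i ≠ 0).card = 1 := hdyv
  obtain ⟨i₀, hi₀⟩ := Finset.card_eq_one.mp hcard
  have hi₀mem : (y - v) i₀ ≠ 0 := by
    have : i₀ ∈ Finset.univ.filter fun i => (y - v) i ≠ 0 := hi₀ ▸ Finset.mem_singleton_self i₀
    simpa using this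
  have hoff : ∀ i, i ≠ i₀ → y i = v i := by
    intro i hi
    by_contra h
    have : i ∈ Finset.univ.filter fun i => (y - v) i ≠ 0 := by
      simp [sub_eq_zero, h]
    rw [hi₀, Finset.mem_singleton] at this
    exact hi this
  -- y i₀ ≠ 0
  have hyi₀ : y i₀ ≠ 0 := by
    intro hy0
    -- then hw y < hw v, and y not coset leader gives a contradiction
    have hsub : (Finset.univ.filter fun i => y i ≠ 0) ⊂
        (Finset.univ.filter fun i => v i ≠ 0) := by
      constructor
      · intro i hi
        simp only [Finset.mem_filter, Finset.mem_univ, true_and] at *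
        rcases eq_or_ne i i₀ with rfl | h
        · exact absurd hy0 hi
        · rw [← hoff i h]; exact hi
      · intro h
        have hv0 : v i₀ ≠ 0 := by
          intro hv0
          apply hi₀mem
          simp [hy0, hv0]
        have := h (by simp [hv0] : i₀ ∈ Finset.univ.filter fun i => v i ≠ 0)
        simp only [Finset.mem_filter, Finset.mem_univ, true_and] at this
        exact this hy0
    have hlt : hw y < hw v := Finset.card_lt_card hsub
    -- y not in VorD C 0: some codeword closer
    rw [VorD] at hyNot
    simp only [Set.mem_setOf_eq, not_forall] at hyNot
    obtain ⟨c, hc, hclt⟩ := hyNot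
    push_neg at hclt
    have hclt' : hw (y - c) < hw y := by simpa [dH] using hclt
    have h2 : hw (v - c) ≤ hw (y - c) + 1 := by
      have : v - c = (y - c) + (-(y - v)) := by abel
      rw [this]
      calc hw ((y - c) + (-(y - v))) ≤ hw (y - c) + hw (-(y - v)) := hw_add_le' _ _
        _ = hw (y - c) + hw (y - v) := by rw [hw_neg']
        _ = hw (y - c) + 1 := by rw [show hw (y - v) = 1 from hdyv]
    have h3 : hw v ≤ hw (v - c) := by
      have := hv c hc
      simpa [dH] using this
    omega
  -- find a nonzero digit
  have hrepr : b.repr (y i₀) ≠ 0 := by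
    intro h
    exact hyi₀ (by simpa using b.repr.map_eq_zero_iff.mp h)
  obtain ⟨j, hj⟩ : ∃ j, b.repr (y i₀) j ≠ 0 := by
    by_contra h
    push_neg at h
    exact hrepr (Finsupp.ext h)
  set e : Fin n → K := eGen β i₀ j with he
  have hei₀ : e i₀ = b j := by
    rw [he, eGen, Pi.single_eq_same, hβ j]
  refine ⟨hw0, hwC, y - e, y - w, i₀, j, by abel, ?_, ?_, ?_, ?_⟩
  · -- digit condition
    have h₁ : (y - e + e) i₀ = y i₀ := by simp
    have h₂ : (y - e) i₀ = y i₀ - b j := by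
      simp [Pi.sub_apply, hei₀]
    rw [h₁, h₂, map_sub, Module.Basis.repr_self]
    simp only [Finsupp.coe_sub, Pi.sub_apply, Finsupp.single_eq_same]
    set a := b.repr (y i₀) j with ha
    have hp : p.Prime := Fact.out
    have hplt : 1 < p := hp.one_lt
    haveI : NeZero p := ⟨hp.pos.ne'⟩
    have hv1 : (1 : ZMod p).val = 1 := ZMod.val_one p
    have hlt : (a - 1).val < p := ZMod.val_lt _
    rcases lt_or_eq_of_le (Nat.succ_le_of_lt hlt) with h | h
    · conv_lhs => rw [show a = a - 1 + 1 by ring]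
      rw [ZMod.val_add, hv1, Nat.mod_eq_of_lt h]
    · exfalso
      apply hj
      have hp' : (a - 1).val + 1 = p := h
      have hz : (a - 1 + 1).val = 0 := by rw [ZMod.val_add, hv1, hp', Nat.mod_self]
      have h0 : a - 1 + 1 = 0 := (ZMod.val_eq_zero _).mp hz
      calc a = a - 1 + 1 := by ring
        _ = 0 := h0
  · -- n₂ coset leader
    intro c hc
    have := hyW (w - c) (sub_mem hwC hc)
    have heq : y - (w - c) = (y - w) + c := by abel
    simpa [dH, heq] using this
  · -- dHSet (CL C) (y - e) ≤ 1
    have hmem : dH (y - e) v ∈ (dH (y - e)) '' CL C := ⟨v, hvCL, rfl⟩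
    have hle : dHSet (CL C) (y - e) ≤ dH (y - e) v := by
      rw [dHSet]
      have : (dH (y - e)) '' CL C = (fun z => dH (y - e) z) '' CL C := rfl
      exact Nat.sInf_le hmem
    refine le_trans hle ?_
    rw [dH, hw]
    calc (Finset.univ.filter fun i => (y - e - v) i ≠ 0).card
        ≤ ({i₀} : Finset (Fin n)).card := by
          apply Finset.card_le_card
          intro i hi
          simp only [Finset.mem_filter, Finset.mem_univ, true_and, Finset.mem_singleton] at *
          by_contra h
          apply hi
          have he0 : e i = 0 := Pi.single_eq_of_ne h _
          have hyv : y i = v i := hoff i h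
          simp [Pi.sub_apply, he0, hyv]
      _ = 1 := Finset.card_singleton i₀
  · -- dHSet (CL C) (y - e + e) ≤ 1
    have hye : y - e + e = y := by abel
    rw [hye]
    exact Nat.sInf_le ⟨v, hvCL, hdyv⟩
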